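/- Let t > 1 and a = (xt)^(1/(t+1)). For distinct positive integers m, n ≤ a, the values ⌊x/m^t⌋ and ⌊x/n^t⌋ are distinct; hence the number of elements of {⌊x/n^t⌋ : 1 ≤ n ≤ x} that are ≥ x/a^t is (tx)^(1/(t+1)) + O(1). -/

import Mathlib

-- core gap lemma
lemma my_gap (t : ℝ) (ht : 1 < t) (x : ℝ) (hx : 0 < x) (m n : ℝ)
    (hm : 1 ≤ m) (hmn : m + 1 ≤ n) (hna : n ≤ (x * t) ^ (1 / (t + 1))) :
    x / n ^ t + 1 < x / m ^ t := by
  have ht0 : (0:ℝ) < t := by linarith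
  have hxt : (0:ℝ) < x * t := by positivity
  have hm0 : (0:ℝ) < m := by linarith
  have hn0 : (0:ℝ) < n := by linarith
  set A := m ^ t with hAdef
  set B := n ^ t with hBdef
  have hA : (0:ℝ) < A := Real.rpow_pos_of_pos hm0 t
  have hB : (0:ℝ) < B := Real.rpow_pos_of_pos hn0 t
  clear_value A B
  -- a^(t+1) = x*t
  have ha : ((x * t) ^ (1 / (t + 1))) ^ (t + 1) = x * t := by
    rw [← Real.rpow_mul hxt.le, one_div_mul_cancel (by linarith : t + 1 ≠ 0), Real.rpow_one]
  -- n^(t+1) ≤ x*t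
  have hnp : n ^ (t + 1) ≤ x * t := by
    have := Real.rpow_le_rpow hn0.le hna (by linarith : (0:ℝ) ≤ t + 1)
    rwa [ha] at this
  have hsplit : n ^ (t + 1) = B * n := by
    rw [Real.rpow_add hn0, Real.rpow_one, hBdef]
  have hprod : m * B < x * t := by
    have h1 : m * B < n * B := by nlinarith
    nlinarith [hsplit, hnp]
  -- Bernoulli
  have hs0 : (0:ℝ) ≤ (n - m) / m := div_nonneg (by linarith) hm0.le
  have hb := one_add_mul_self_le_rpow_one_add (by linarith : (-1:ℝ) ≤ (n - m) / m) ht.le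
  have heq : (1 + (n - m) / m : ℝ) = n / m := by field_simp; ring
  rw [heq] at hb
  have hdiv : (n / m) ^ t = B / A := by rw [Real.div_rpow hn0.le hm0.le, hAdef, hBdef]
  rw [hdiv] at hb
  -- hb : 1 + t * ((n-m)/m) ≤ B / A
  have hBern : A * (m + t * (n - m)) ≤ B * m := by
    have h2 : (m + t * (n - m)) / m ≤ B / A := by
      have : (m + t * (n - m)) / m = 1 + t * ((n - m) / m) := by field_simp
      rw [this]; exact hb
    have := (div_le_div_iff₀ hm0 hA).mp h2
    nlinarith [this]
  clear ha hnp hsplit hb hdiv heq hna hs0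
  have h3 : A * m + A * t ≤ B * m := by
    nlinarith [mul_nonneg (mul_pos hA ht0).le (by linarith : (0:ℝ) ≤ n - m - 1)]
  have h4 : A * t ≤ m * (B - A) := by nlinarith [h3]
  have h5 : x * (A * t) ≤ x * (m * (B - A)) := mul_le_mul_of_nonneg_left h4 hx.le
  have h6 : A * (m * B) < x * (A * t) := by nlinarith [mul_lt_mul_of_pos_left hprod hA]
  have h7 : 0 < m * (x * B - x * A - A * B) := by nlinarith [h5, h6]
  have h8 : 0 < x * B - x * A - A * B := by
    rcases lt_or_ge 0 (x * B - x * A - A * B) with h | h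
    · exact h
    · linarith [mul_nonpos_of_nonneg_of_nonpos hm0.le h, h7]
  have hgoal : (x + B) * A < x * B := by linarith [h8]
  have hrw : x / B + 1 = (x + B) / B := by field_simp
  rw [hrw, div_lt_div_iff₀ hB hA]
  exact hgoal

lemma my_inj (t : ℝ) (ht : 1 < t) (x : ℝ) (hx : 0 < x) (m n : ℕ) (hm : 1 ≤ m) (hn : 1 ≤ n)
    (hma : (m : ℝ) ≤ (x * t) ^ (1 / (t + 1))) (hna : (n : ℝ) ≤ (x * t) ^ (1 / (t + 1)))
    (hmn : m ≠ n) : ⌊x / (m : ℝ) ^ t⌋ ≠ ⌊x / (n : ℝ) ^ t⌋ := by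
  have key : ∀ p q : ℕ, 1 ≤ p → p < q → (q : ℝ) ≤ (x * t) ^ (1 / (t + 1)) →
      ⌊x / (q : ℝ) ^ t⌋ < ⌊x / (p : ℝ) ^ t⌋ := by
    intro p q hp hpq hqa
    have hq1 : (p + 1 : ℕ) ≤ q := hpq
    have hgap := my_gap t ht x hx p q (by exact_mod_cast hp) (by exact_mod_cast hq1) hqa
    have h1 : (⌊x / (q : ℝ) ^ t⌋ : ℝ) + 1 ≤ x / (p : ℝ) ^ t := by
      have := Int.floor_le (x / (q : ℝ) ^ t); linarith
    have h2 : ⌊x / (q : ℝ) ^ t⌋ + 1 ≤ ⌊x / (p : ℝ) ^ t⌋ :=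
      Int.le_floor.mpr (by push_cast; exact h1)
    omega
  rcases lt_or_gt_of_ne hmn with h | h
  · exact (key m n hm h hna).ne'
  · exact (key n m hn h hma).ne

open Classical in
theorem stmt_3 (t : ℝ) (ht : 1 < t) :
    (∀ x : ℝ, 0 < x → ∀ m n : ℕ, 1 ≤ m → 1 ≤ n →
        (m : ℝ) ≤ (x * t) ^ (1 / (t + 1)) → (n : ℝ) ≤ (x * t) ^ (1 / (t + 1)) → m ≠ n →
        ⌊x / (m : ℝ) ^ t⌋ ≠ ⌊x / (n : ℝ) ^ t⌋) ∧
    (∃ C : ℝ, ∀ x : ℕ, 1 ≤ x →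
      |(((((Finset.Icc 1 x).image (fun n : ℕ => ⌊(x : ℝ) / (n : ℝ) ^ t⌋)).filter
            (fun k : ℤ => (x : ℝ) / (((x : ℝ) * t) ^ (1 / (t + 1))) ^ t ≤ (k : ℝ))).card : ℝ))
        - (t * (x : ℝ)) ^ (1 / (t + 1))| ≤ C) := by
  constructor
  · intro x hx m n hm hn hma hna hmn
    exact my_inj t ht x hx m n hm hn hma hna hmn
  · refine ⟨t + 2, ?_⟩
    intro x hx
    set X : ℝ := (x : ℝ) with hXdef
    have hX1 : (1:ℝ) ≤ X := by rw [hXdef]; exact_mod_cast hx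
    have hX0 : (0:ℝ) < X := by linarith
    have ht0 : (0:ℝ) < t := by linarith
    set a : ℝ := (X * t) ^ (1 / (t + 1)) with hadef
    have hxt : (0:ℝ) < X * t := by positivity
    have ha0 : 0 < a := Real.rpow_pos_of_pos hxt _
    have ha1 : 1 < a := by
      rw [hadef, Real.one_lt_rpow_iff_of_pos hxt]
      exact Or.inl ⟨by nlinarith, by positivity⟩
    have hap1 : a ^ (t + 1) = X * t := by
      rw [hadef, ← Real.rpow_mul hxt.le, one_div_mul_cancel (by linarith : t + 1 ≠ 0),
        Real.rpow_one]
    have hat : a ^ t * a = X * t := by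
      rw [← Real.rpow_add_one ha0.ne' t]; exact hap1
    have hat0 : 0 < a ^ t := Real.rpow_pos_of_pos ha0 t
    have hthr : X / a ^ t = a / t := by
      rw [div_eq_div_iff hat0.ne' ht0.ne']; linarith [hat]
    set f : ℕ → ℤ := (fun n : ℕ => ⌊X / (n : ℝ) ^ t⌋) with hfdef
    set S := ((Finset.Icc 1 x).image f).filter (fun k : ℤ => X / a ^ t ≤ (k : ℝ)) with hSdef
    -- upper bound
    have hupper : (S.card : ℝ) ≤ a := by
      have hsub : S ⊆ (Finset.Icc 1 (Nat.floor a)).image f := by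
        intro k hk
        rw [hSdef, Finset.mem_filter, Finset.mem_image] at hk
        obtain ⟨⟨n, hnmem, rfl⟩, hth⟩ := hk
        rw [Finset.mem_Icc] at hnmem
        rw [Finset.mem_image]
        refine ⟨n, Finset.mem_Icc.mpr ⟨hnmem.1, ?_⟩, rfl⟩
        by_contra hcon
        have hcon' : a < (n : ℝ) := (Nat.floor_lt ha0.le).mp (by omega)
        have hlt : X / (n : ℝ) ^ t < X / a ^ t :=
          div_lt_div_of_pos_left hX0 hat0 (Real.rpow_lt_rpow ha0.le hcon' ht0)
        have hfl := Int.floor_le (X / (n : ℝ) ^ t)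
        simp only [hfdef] at hth
        linarith
      calc (S.card : ℝ) ≤ (((Finset.Icc 1 (Nat.floor a)).image f).card : ℝ) := by
            exact_mod_cast Finset.card_le_card hsub
        _ ≤ ((Finset.Icc 1 (Nat.floor a)).card : ℝ) := by exact_mod_cast Finset.card_image_le
        _ = (Nat.floor a : ℝ) := by rw [Nat.card_Icc]; simp
        _ ≤ a := Nat.floor_le ha0.le
    have hcomm : (t * X) ^ (1 / (t + 1)) = a := by rw [hadef, mul_comm]
    rw [hcomm, abs_le]
    have hcard0 : (0:ℝ) ≤ (S.card : ℝ) := by positivity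
    rcases eq_or_lt_of_le hx with h1 | hx2
    · -- x = 1
      have hXeq : X = 1 := by rw [hXdef, ← h1]; norm_num
      have haT : a ≤ t := by
        rw [hadef, hXeq, one_mul]
        calc t ^ (1 / (t + 1)) ≤ t ^ (1:ℝ) :=
              Real.rpow_le_rpow_of_exponent_le ht.le
                (by rw [div_le_one (by linarith)]; linarith)
          _ = t := Real.rpow_one t
      exact ⟨by linarith, by linarith⟩
    · -- 2 ≤ x
      have hx2' : 2 ≤ x := hx2
      have hX2 : (2:ℝ) ≤ X := by rw [hXdef]; exact_mod_cast hx2'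
      have h2t : (1:ℝ) + t ≤ 2 ^ t := by
        have h := one_add_mul_self_le_rpow_one_add (by norm_num : (-1:ℝ) ≤ 1) ht.le
        norm_num at h
        exact h
      have hXt : t ≤ X ^ t := by
        have h2X : (2:ℝ) ^ t ≤ X ^ t := Real.rpow_le_rpow (by norm_num) hX2 ht0.le
        linarith
      have haX : a ≤ X := by
        have h1 : a ^ (t + 1) ≤ X ^ (t + 1) := by
          rw [hap1, Real.rpow_add_one hX0.ne']
          nlinarith [hXt, hX0]
        exact (Real.rpow_le_rpow_iff ha0.le hX0.le (by linarith : (0:ℝ) < t + 1)).mp h1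
      set M := Nat.floor (a - 1) with hMdef
      have hMa : (M : ℝ) ≤ a - 1 := Nat.floor_le (by linarith)
      have hMx : M ≤ x := by
        have hMX : (M : ℝ) ≤ (x : ℝ) := by rw [← hXdef]; linarith
        exact_mod_cast hMX
      have hmem : ∀ n ∈ Finset.Icc 1 M, f n ∈ S := by
        intro n hn
        rw [Finset.mem_Icc] at hn
        obtain ⟨hn1, hnM⟩ := hn
        have hn1' : (1:ℝ) ≤ (n : ℝ) := by exact_mod_cast hn1
        have hnr : (n : ℝ) ≤ a - 1 := le_trans (by exact_mod_cast hnM) hMa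
        have ha1' : (0:ℝ) < a - 1 := by linarith
        have hb := one_add_mul_self_le_rpow_one_add
          (by linarith [one_div_nonneg.mpr ha1'.le] : (-1:ℝ) ≤ 1 / (a - 1)) ht.le
        have he : (1 + 1 / (a - 1)) = a / (a - 1) := by field_simp; ring
        rw [he, Real.div_rpow ha0.le ha1'.le] at hb
        have hA1t : 0 < (a - 1) ^ t := Real.rpow_pos_of_pos ha1' t
        have hX_eq : X = (a / t) * a ^ t := by
          rw [← hthr]; field_simp
        have hstep : a / t + 1 ≤ X / (a - 1) ^ t := by
          have h1 : X / (a - 1) ^ t = (a / t) * (a ^ t / (a - 1) ^ t) := by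
            rw [hX_eq, mul_div_assoc]
          have h2 : (a / t) * (1 + t * (1 / (a - 1))) ≤ (a / t) * (a ^ t / (a - 1) ^ t) :=
            mul_le_mul_of_nonneg_left hb (by positivity)
          have h3 : (a / t) * (1 + t * (1 / (a - 1))) = a / t + a / (a - 1) := by
            field_simp
          have h4 : (1:ℝ) ≤ a / (a - 1) := by rw [le_div_iff₀ ha1']; linarith
          rw [h1]
          linarith [h2, h3 ▸ h2]
        have hmon : X / (a - 1) ^ t ≤ X / (n : ℝ) ^ t :=
          div_le_div_of_nonneg_left hX0.le (by positivity)
            (Real.rpow_le_rpow (by positivity) hnr ht0.le)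
        have hflr := Int.sub_one_lt_floor (X / (n : ℝ) ^ t)
        have hfl : X / a ^ t ≤ ((f n : ℤ) : ℝ) := by
          rw [hthr]
          simp only [hfdef]
          linarith
        rw [hSdef, Finset.mem_filter]
        exact ⟨Finset.mem_image_of_mem f (Finset.mem_Icc.mpr ⟨hn1, le_trans hnM hMx⟩), hfl⟩
      have hinj2 : Set.InjOn f (Finset.Icc 1 M) := by
        intro p hp q hq hpq
        simp only [Finset.coe_Icc, Set.mem_Icc] at hp hq
        by_contra hne
        have hpa : (p : ℝ) ≤ (X * t) ^ (1 / (t + 1)) := by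
          rw [← hadef]
          have : (p : ℝ) ≤ (M : ℝ) := by exact_mod_cast hp.2
          linarith
        have hqa : (q : ℝ) ≤ (X * t) ^ (1 / (t + 1)) := by
          rw [← hadef]
          have : (q : ℝ) ≤ (M : ℝ) := by exact_mod_cast hq.2
          linarith
        exact my_inj t ht X hX0 p q hp.1 hq.1 hpa hqa hne hpq
      have hcardM : M ≤ S.card := by
        have h := Finset.card_le_card_of_injOn f hmem hinj2
        rwa [Nat.card_Icc, Nat.add_sub_cancel] at h
      have hcardM' : (M : ℝ) ≤ (S.card : ℝ) := by exact_mod_cast hcardM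
      have hM2 : a - 2 ≤ (M : ℝ) := by
        have := Nat.sub_one_lt_floor (a - 1)
        linarith
      exact ⟨by linarith, by linarith⟩
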